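/- If G and H are graphs on the same vertex set with the same number of edges, and G has strictly more than (1/2) * C(n,2) edges where n is the number of vertices, then G and H having isomorphic edge decks implies G and H are isomorphic. (Lovász density criterion: a graph on n vertices with more than half the possible edges is edge reconstructible.) -/

import Mathlib

open Finset
set_option linter.unusedSectionVars false

namespace Stmt11Aux

variable {V : Type*} [Fintype V] [DecidableEq V]

def mapS (π : Equiv.Perm V) (A : Finset (Sym2 V)) : Finset (Sym2 V) :=
  A.image (Sym2.map π)

lemma mapS_mapS (σ π : Equiv.Perm V) (A : Finset (Sym2 V)) :
    mapS σ (mapS π A) = mapS (σ * π) A := by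
  unfold mapS
  rw [image_image]
  congr 1
  funext x
  simp [Sym2.map_map]

lemma mapS_one (A : Finset (Sym2 V)) : mapS 1 A = A := by
  ext x
  simp [mapS, Equiv.Perm.coe_one, Sym2.map_id]

lemma mapS_cancel (π : Equiv.Perm V) (A : Finset (Sym2 V)) :
    mapS π (mapS π⁻¹ A) = A := by
  rw [mapS_mapS, mul_inv_cancel, mapS_one]

lemma mapS_cancel' (π : Equiv.Perm V) (A : Finset (Sym2 V)) :
    mapS π⁻¹ (mapS π A) = A := by
  rw [mapS_mapS, inv_mul_cancel, mapS_one]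

lemma card_mapS (π : Equiv.Perm V) (A : Finset (Sym2 V)) :
    (mapS π A).card = A.card :=
  card_image_of_injective _ (Sym2.map.injective π.injective)

lemma mapS_mono {π : Equiv.Perm V} {A B : Finset (Sym2 V)} (h : A ⊆ B) :
    mapS π A ⊆ mapS π B := image_subset_image h

lemma mem_mapS {π : Equiv.Perm V} {A : Finset (Sym2 V)} {x : Sym2 V} :
    Sym2.map π x ∈ mapS π A ↔ x ∈ A := by
  constructor
  · intro h
    rcases mem_image.mp h with ⟨y, hy, hxy⟩
    rwa [← Sym2.map.injective π.injective hxy]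
  · exact fun h => mem_image_of_mem _ h

def S (A B : Finset (Sym2 V)) : ℕ :=
  (Finset.univ.filter fun σ : Equiv.Perm V => mapS σ A ⊆ B).card

lemma S_mapS (π : Equiv.Perm V) (A B : Finset (Sym2 V)) :
    S (mapS π A) B = S A B := by
  unfold S
  apply Finset.card_equiv (Equiv.mulRight π)
  intro σ
  simp only [mem_filter, mem_univ, true_and, Equiv.coe_mulRight]
  rw [mapS_mapS]

def W (k : ℕ) (A B : Finset (Sym2 V)) : ℕ :=
  ∑ F ∈ A.powersetCard k, S F B

lemma W_mapS (π : Equiv.Perm V) (k : ℕ) (A B : Finset (Sym2 V)) :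
    W k (mapS π A) B = W k A B := by
  unfold W
  refine Finset.sum_nbij' (fun F => mapS π⁻¹ F) (fun F => mapS π F) ?_ ?_ ?_ ?_ ?_
  · intro F hF
    rcases mem_powersetCard.mp hF with ⟨h1, h2⟩
    refine mem_powersetCard.mpr ⟨?_, by rw [card_mapS, h2]⟩
    have := mapS_mono (π := π⁻¹) h1
    rwa [mapS_cancel'] at this
  · intro F hF
    rcases mem_powersetCard.mp hF with ⟨h1, h2⟩
    exact mem_powersetCard.mpr ⟨mapS_mono h1, by rw [card_mapS, h2]⟩
  · intro F _; exact mapS_cancel π F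
  · intro F _; exact mapS_cancel' π F
  · intro F _
    conv_lhs => rw [← mapS_cancel π F]
    rw [S_mapS]

lemma kelly (k : ℕ) (A B : Finset (Sym2 V)) :
    ∑ e ∈ A, W k (A.erase e) B = (A.card - k) * W k A B := by
  unfold W
  rw [Finset.sum_comm' (t' := A.powersetCard k) (s' := fun F => A \ F)
    (f := fun _ F => S F B) ?_]
  · rw [Finset.mul_sum]
    refine Finset.sum_congr rfl fun F hF => ?_
    rcases mem_powersetCard.mp hF with ⟨h1, h2⟩
    rw [Finset.sum_const, card_sdiff_of_subset h1, h2, smul_eq_mul]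
  · intro e F
    simp only [mem_powersetCard, mem_sdiff, mem_erase, subset_erase]
    constructor
    · rintro ⟨he, ⟨hFA, heF⟩, hc⟩
      exact ⟨⟨he, heF⟩, hFA, hc⟩
    · rintro ⟨⟨he, heF⟩, hFA, hc⟩
      exact ⟨he, ⟨hFA, heF⟩, hc⟩

lemma incl_excl (A B T : Finset (Sym2 V)) (hA : ∀ σ : Equiv.Perm V, mapS σ A ⊆ T)
    (hB : B ⊆ T) :
    (S A B : ℤ) = ∑ F ∈ A.powerset, (-1 : ℤ) ^ F.card * S F (T \ B) := by
  set C := T \ B with hC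
  have step1 : (S A B : ℤ) =
      ∑ σ : Equiv.Perm V, (if mapS σ A ⊆ B then (1 : ℤ) else 0) := by
    unfold S
    rw [Finset.sum_boole]
  have step2 : ∀ σ : Equiv.Perm V, (if mapS σ A ⊆ B then (1 : ℤ) else 0) =
      ∑ F ∈ (mapS σ A ∩ C).powerset, (-1 : ℤ) ^ F.card := by
    intro σ
    rw [Finset.sum_powerset_neg_one_pow_card]
    have hiff : mapS σ A ∩ C = ∅ ↔ mapS σ A ⊆ B := by
      constructor
      · intro h x hx
        by_contra hxB
        have hxT : x ∈ T := hA σ hx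
        have : x ∈ mapS σ A ∩ C := mem_inter.mpr ⟨hx, mem_sdiff.mpr ⟨hxT, hxB⟩⟩
        rw [h] at this
        exact absurd this (notMem_empty x)
      · intro h
        refine eq_empty_of_forall_notMem fun x hx => ?_
        rcases mem_inter.mp hx with ⟨h1, h2⟩
        exact (mem_sdiff.mp h2).2 (h h1)
    by_cases hcase : mapS σ A ⊆ B
    · rw [if_pos hcase, if_pos (hiff.mpr hcase)]
    · rw [if_neg hcase, if_neg (fun h => hcase (hiff.mp h))]
  have step3 : ∀ σ : Equiv.Perm V,
      ∑ F ∈ (mapS σ A ∩ C).powerset, (-1 : ℤ) ^ F.card =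
      ∑ F ∈ A.powerset, (if mapS σ F ⊆ C then (-1 : ℤ) ^ F.card else 0) := by
    intro σ
    rw [← Finset.sum_filter]
    refine Finset.sum_nbij' (fun F => mapS σ⁻¹ F) (fun F => mapS σ F) ?_ ?_ ?_ ?_ ?_
    · intro F hF
      rw [mem_powerset] at hF
      have h1 : F ⊆ mapS σ A := hF.trans inter_subset_left
      have h2 : F ⊆ C := hF.trans inter_subset_right
      rw [mem_filter, mem_powerset]
      constructor
      · have := mapS_mono (π := σ⁻¹) h1
        rwa [mapS_cancel'] at this
      · rwa [mapS_cancel]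
    · intro F hF
      rw [mem_filter, mem_powerset] at hF
      rw [mem_powerset]
      exact subset_inter (mapS_mono hF.1) hF.2
    · intro F _; exact mapS_cancel σ F
    · intro F _; exact mapS_cancel' σ F
    · intro F _; rw [card_mapS]
  calc (S A B : ℤ) = ∑ σ : Equiv.Perm V,
        ∑ F ∈ A.powerset, (if mapS σ F ⊆ C then (-1 : ℤ) ^ F.card else 0) := by
        rw [step1]; exact Finset.sum_congr rfl fun σ _ => (step2 σ).trans (step3 σ)
    _ = ∑ F ∈ A.powerset, ∑ σ : Equiv.Perm V,
        (if mapS σ F ⊆ C then (-1 : ℤ) ^ F.card else 0) := Finset.sum_comm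
    _ = ∑ F ∈ A.powerset, (-1 : ℤ) ^ F.card * S F C := by
        refine Finset.sum_congr rfl fun F _ => ?_
        unfold S
        rw [← Finset.sum_filter, Finset.sum_const, nsmul_eq_mul, mul_comm]

lemma S_eq_sum_W (A B T : Finset (Sym2 V)) (hA : ∀ σ : Equiv.Perm V, mapS σ A ⊆ T)
    (hB : B ⊆ T) :
    (S A B : ℤ) = ∑ k ∈ Finset.range (A.card + 1),
      (-1 : ℤ) ^ k * W k A (T \ B) := by
  rw [incl_excl A B T hA hB, powerset_card_disjiUnion]
  erw [sum_disjiUnion]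
  refine Finset.sum_congr rfl fun k _ => ?_
  unfold W
  push_cast [Finset.mul_sum]
  refine Finset.sum_congr rfl fun F hF => ?_
  rw [(mem_powersetCard.mp hF).2]

lemma S_pos_exists {A B : Finset (Sym2 V)} (h : 0 < S A B) :
    ∃ σ : Equiv.Perm V, mapS σ A ⊆ B := by
  obtain ⟨σ, hσ⟩ := Finset.card_pos.mp h
  exact ⟨σ, (mem_filter.mp hσ).2⟩

end Stmt11Aux

open Stmt11Aux



/-- Lovász density criterion: if G has strictly more than half of the possible C(n,2)
edges, then G is edge reconstructible: any graph H on the same vertex set with the same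
number of edges whose edge deck is isomorphic to that of G (witnessed by a bijection φ
between the edge sets with isomorphic corresponding edge-deleted cards) is isomorphic
to G. -/
theorem stmt11 {V : Type*} [Fintype V] [DecidableEq V]
    (G H : SimpleGraph V) [DecidableRel G.Adj] [DecidableRel H.Adj]
    (hedges : G.edgeFinset.card = H.edgeFinset.card)
    (hdense : (Fintype.card V).choose 2 < 2 * G.edgeFinset.card)
    (φ : G.edgeFinset ≃ H.edgeFinset)
    (hdeck : ∀ e : G.edgeFinset,
      Nonempty ((G.deleteEdges {(e : Sym2 V)}) ≃g (H.deleteEdges {((φ e : Sym2 V))}))) :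
    Nonempty (G ≃g H) := by
  classical
  set T := (⊤ : SimpleGraph V).edgeFinset with hT_def
  set m := G.edgeFinset.card with hm_def
  have hBm : H.edgeFinset.card = m := hedges.symm
  have hTcard : T.card = (Fintype.card V).choose 2 :=
    SimpleGraph.card_edgeFinset_top_eq_card_choose_two
  have hsubT : ∀ (X : SimpleGraph V) [DecidableRel X.Adj] (σ : Equiv.Perm V),
      mapS σ X.edgeFinset ⊆ T := by
    intro X _ σ x hx
    rcases Finset.mem_image.mp hx with ⟨y, hy, rfl⟩
    have hnd : ¬ y.IsDiag := SimpleGraph.not_isDiag_of_mem_edgeFinset hy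
    rw [hT_def, SimpleGraph.mem_edgeFinset, SimpleGraph.edgeSet_top]
    revert hnd
    refine Sym2.ind (fun a b hnd => ?_) y
    rw [Sym2.map_pair_eq]
    simp only [Set.mem_setOf_eq, Sym2.isDiag_iff_proj_eq] at *
    exact fun h => hnd (σ.injective h)
  have hAT : ∀ σ : Equiv.Perm V, mapS σ G.edgeFinset ⊆ T := hsubT G
  have hBT : ∀ σ : Equiv.Perm V, mapS σ H.edgeFinset ⊆ T := hsubT H
  have hBsubT : H.edgeFinset ⊆ T := by
    have := hBT 1
    rwa [mapS_one] at this
  set C := T \ H.edgeFinset with hC_def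
  have hCcard : C.card = (Fintype.card V).choose 2 - m := by
    rw [hC_def, card_sdiff_of_subset hBsubT, hTcard, hBm]
  have hCm : C.card < m := by
    have hmle : m ≤ (Fintype.card V).choose 2 := by
      rw [hm_def, ← hTcard]
      have := hAT 1
      rw [mapS_one] at this
      exact Finset.card_le_card this
    omega
  -- Kelly invariance for k < m
  have hW : ∀ k, k < m → W k G.edgeFinset C = W k H.edgeFinset C := by
    intro k hk
    have hsum : ∑ e ∈ G.edgeFinset, W k (G.edgeFinset.erase e) C = ∑ f ∈ H.edgeFinset, W k (H.edgeFinset.erase f) C := by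
      rw [← Finset.sum_attach G.edgeFinset (fun e => W k (G.edgeFinset.erase e) C),
          ← Finset.sum_attach H.edgeFinset (fun f => W k (H.edgeFinset.erase f) C),
          ← Finset.univ_eq_attach, ← Finset.univ_eq_attach,
          ← Equiv.sum_comp φ (fun f : ↥H.edgeFinset => W k (H.edgeFinset.erase ↑f) C)]
      refine Finset.sum_congr rfl fun e _ => ?_
      obtain ⟨ψ⟩ := hdeck e
      have hmap : mapS ψ.toEquiv (G.edgeFinset.erase ↑e) = H.edgeFinset.erase ↑(φ e) := by
        apply Finset.eq_of_subset_of_card_le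
        · intro x hx
          rcases Finset.mem_image.mp hx with ⟨y, hy, rfl⟩
          revert hy
          refine Sym2.ind (fun a b hy => ?_) y
          obtain ⟨hne, hmem⟩ := Finset.mem_erase.mp hy
          have hadj : G.Adj a b := by
            rwa [SimpleGraph.mem_edgeFinset, SimpleGraph.mem_edgeSet] at hmem
          have hGdel : (G.deleteEdges {((e : Sym2 V))}).Adj a b := by
            rw [SimpleGraph.deleteEdges_adj]
            exact ⟨hadj, by simpa using hne⟩
          have hHdel := SimpleGraph.deleteEdges_adj.mp (ψ.map_rel_iff.mpr hGdel)
          rw [Sym2.map_pair_eq]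
          refine Finset.mem_erase.mpr ⟨?_, ?_⟩
          · simpa using hHdel.2
          rw [SimpleGraph.mem_edgeFinset, SimpleGraph.mem_edgeSet]
          exact hHdel.1
        · rw [card_mapS, Finset.card_erase_of_mem e.2, Finset.card_erase_of_mem (φ e).2,
            hBm]
      rw [← hmap, W_mapS]
    have h1 := kelly k G.edgeFinset C
    have h2 := kelly k H.edgeFinset C
    rw [hsum, h2, hBm] at h1
    have hpos : 0 < m - k := by omega
    exact (Nat.eq_of_mul_eq_mul_left hpos h1.symm)
  -- top coefficient vanishes
  have hSzero : ∀ X : Finset (Sym2 V), C.card < X.card → S X C = 0 := by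
    intro X hX
    rw [S, Finset.card_eq_zero, Finset.filter_eq_empty_iff]
    intro σ _
    intro h
    have := Finset.card_le_card h
    rw [card_mapS] at this
    omega
  have hWmA : W m G.edgeFinset C = 0 := by
    rw [W, hm_def, Finset.powersetCard_self, Finset.sum_singleton]
    exact hSzero G.edgeFinset (by omega)
  have hWmB : W m H.edgeFinset C = 0 := by
    rw [W, ← hBm, Finset.powersetCard_self, Finset.sum_singleton]
    apply hSzero
    rw [hBm]; omega
  -- main count equality
  have hmain : S G.edgeFinset H.edgeFinset = S H.edgeFinset H.edgeFinset := by
    have e1 := S_eq_sum_W G.edgeFinset H.edgeFinset T hAT hBsubT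
    have e2 := S_eq_sum_W H.edgeFinset H.edgeFinset T hBT hBsubT
    rw [← hC_def] at e1 e2
    rw [← hm_def] at e1
    rw [hBm] at e2
    have : (S G.edgeFinset H.edgeFinset : ℤ) = (S H.edgeFinset H.edgeFinset : ℤ) := by
      rw [e1, e2]
      refine Finset.sum_congr rfl fun k hk => ?_
      rcases Nat.lt_or_ge k m with h | h
      · rw [hW k h]
      · have hkm : k = m := by
          have := Finset.mem_range.mp hk; omega
        subst hkm
        rw [hWmA, hWmB]
    exact_mod_cast this
  -- S H.edgeFinset H.edgeFinset positive
  have hSBB : 0 < S H.edgeFinset H.edgeFinset := by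
    rw [S, Finset.card_pos]
    exact ⟨1, Finset.mem_filter.mpr ⟨Finset.mem_univ _, by rw [mapS_one]⟩⟩
  obtain ⟨σ, hσ⟩ := S_pos_exists (hmain ▸ hSBB)
  have hEq : mapS σ G.edgeFinset = H.edgeFinset :=
    Finset.eq_of_subset_of_card_le hσ (by rw [card_mapS, ← hm_def, hBm])
  refine ⟨⟨σ, ?_⟩⟩
  intro a b
  have h1 : H.Adj (σ a) (σ b) ↔ s(σ a, σ b) ∈ H.edgeFinset := by
    rw [SimpleGraph.mem_edgeFinset, SimpleGraph.mem_edgeSet]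
  have h2 : G.Adj a b ↔ s(a, b) ∈ G.edgeFinset := by
    rw [SimpleGraph.mem_edgeFinset, SimpleGraph.mem_edgeSet]
  rw [h1, h2, ← hEq, ← Sym2.map_pair_eq, mem_mapS]
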